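/- arXiv:2303.06671 — 2 statements merged into one kernel-verified Lean document; each statement's English description precedes it below -/
import Mathlib

section
/- Let H be a complex Hilbert space with inner product ⟨·,·⟩ and let (b_i)_{i∈ℕ} be an orthonormal basis of H. Let (λ_i)_{i∈ℕ} be positive reals with β := inf_i |λ_i - 1|/(λ_i + 1) > 0. Define the sesquilinear form B(u,v) = Σ_i (λ_i - 1)·⟨u,b_i⟩·conj(⟨v,b_i⟩) and the norm ‖u‖_P² = Σ_i (λ_i + 1)·|⟨u,b_i⟩|² (on the subspace where this is finite). Then for every u in that subspace there exists v with ‖v‖_P = ‖u‖_P and Re B(u,v) ≥ β·‖u‖_P², i.e. the inf-sup constant of B with respect to ‖·‖_P is at least β. -/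
/-- Inf-sup stability of the spectrally diagonalized Helmholtz form
`B(u,v) = ∑ (λᵢ - 1) ⟨u,bᵢ⟩ conj ⟨v,bᵢ⟩` with respect to the norm
`‖u‖_P² = ∑ (λᵢ + 1) |⟨u,bᵢ⟩|²`: for every `u` in the domain there is `v`
with `‖v‖_P = ‖u‖_P` and `Re B(u,v) ≥ β ‖u‖_P²`. -/
theorem acms_inf_sup
    {H : Type*} [NormedAddCommGroup H] [InnerProductSpace ℂ H] [CompleteSpace H]
    (b : HilbertBasis ℕ ℂ H) (lam : ℕ → ℝ) (hlam : ∀ i, 0 < lam i)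
    (β : ℝ) (hβ : 0 < β) (hβinf : ∀ i, β ≤ |lam i - 1| / (lam i + 1))
    (u : H) (hu : Summable (fun i => (lam i + 1) * ‖b.repr u i‖ ^ 2)) :
    ∃ v : H,
      Summable (fun i => (lam i + 1) * ‖b.repr v i‖ ^ 2) ∧
      (∑' i, (lam i + 1) * ‖b.repr v i‖ ^ 2) = (∑' i, (lam i + 1) * ‖b.repr u i‖ ^ 2) ∧
      Summable (fun i => ((lam i : ℂ) - 1) * b.repr u i * (starRingEnd ℂ) (b.repr v i)) ∧
      β * (∑' i, (lam i + 1) * ‖b.repr u i‖ ^ 2) ≤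
        (∑' i, ((lam i : ℂ) - 1) * b.repr u i * (starRingEnd ℂ) (b.repr v i)).re := by
  classical
  set s : ℕ → ℝ := fun i => if lam i < 1 then -1 else 1 with hs
  have hs_abs : ∀ i, |s i| = 1 := by
    intro i; simp only [hs]; split <;> simp
  have hs_mul : ∀ i, (lam i - 1) * s i = |lam i - 1| := by
    intro i; simp only [hs]; split
    · rename_i h; rw [abs_of_neg (by linarith)]; ring
    · rename_i h; rw [abs_of_nonneg (by linarith [not_lt.mp h])]; ring
  set f : ℕ → ℂ := fun i => (s i : ℂ) * b.repr u i with hf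
  have hnormf : ∀ i, ‖f i‖ = ‖b.repr u i‖ := by
    intro i
    simp [hf, norm_mul, Complex.norm_real, hs_abs i]
  have hmem : Memℓp f 2 := by
    have h2 := (b.repr u).prop
    have : Memℓp (fun i => (b.repr u) i) 2 := h2
    refine memℓp_gen ?_
    have hsum : Summable fun i => ‖(b.repr u) i‖ ^ ENNReal.toReal 2 :=
      this.summable (by norm_num)
    refine hsum.congr fun i => ?_
    rw [hnormf i]
  set v : H := b.repr.symm ⟨f, hmem⟩ with hv
  have hvrepr : ∀ i, b.repr v i = f i := by
    intro i
    simp [hv]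
  have hvnorm : ∀ i, ‖b.repr v i‖ = ‖b.repr u i‖ := fun i => by
    rw [hvrepr i, hnormf i]
  -- the diagonal term is real and nonnegative
  have hterm : ∀ i, ((lam i : ℂ) - 1) * b.repr u i * (starRingEnd ℂ) (b.repr v i)
      = ((|lam i - 1| * ‖b.repr u i‖ ^ 2 : ℝ) : ℂ) := by
    intro i
    rw [hvrepr i]
    simp only [hf, map_mul, Complex.conj_ofReal]
    have hc : b.repr u i * (starRingEnd ℂ) (b.repr u i) = ((‖b.repr u i‖ ^ 2 : ℝ) : ℂ) := by
      rw [Complex.mul_conj]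
      norm_cast
      simp [Complex.normSq_eq_norm_sq]
    rw [← hs_mul i]
    push_cast
    rw [show ((lam i : ℂ) - 1) * b.repr u i * ((s i : ℂ) * (starRingEnd ℂ) (b.repr u i))
        = ((lam i : ℂ) - 1) * (s i : ℂ) * (b.repr u i * (starRingEnd ℂ) (b.repr u i)) by ring,
      hc]
    push_cast
    ring
  have habs_le : ∀ i, |lam i - 1| ≤ lam i + 1 := by
    intro i
    rcases abs_cases (lam i - 1) with ⟨h, _⟩ | ⟨h, _⟩ <;> rw [h] <;> linarith [(hlam i).le]
  have hg : Summable fun i => |lam i - 1| * ‖b.repr u i‖ ^ 2 := by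
    refine Summable.of_nonneg_of_le (fun i => by positivity) (fun i => ?_) hu
    exact mul_le_mul_of_nonneg_right (habs_le i) (by positivity)
  refine ⟨v, ?_, ?_, ?_, ?_⟩
  · exact hu.congr fun i => by rw [hvnorm i]
  · exact tsum_congr fun i => by rw [hvnorm i]
  · refine ((hg.map Complex.ofRealHom Complex.continuous_ofReal).congr fun i => ?_)
    rw [hterm i]; rfl
  · have hre : (∑' i, ((lam i : ℂ) - 1) * b.repr u i * (starRingEnd ℂ) (b.repr v i)).re
        = ∑' i, |lam i - 1| * ‖b.repr u i‖ ^ 2 := by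
      rw [tsum_congr hterm, ← Complex.ofReal_tsum, Complex.ofReal_re]
    rw [hre, ← tsum_mul_left]
    refine Summable.tsum_le_tsum (fun i => ?_) (hu.mul_left β) hg
    have hpos : 0 < lam i + 1 := by linarith [hlam i]
    calc β * ((lam i + 1) * ‖b.repr u i‖ ^ 2)
        = (β * (lam i + 1)) * ‖b.repr u i‖ ^ 2 := by ring
      _ ≤ |lam i - 1| * ‖b.repr u i‖ ^ 2 := by
          refine mul_le_mul_of_nonneg_right ?_ (by positivity)
          linarith [(le_div_iff₀ hpos).mp (hβinf i)]
end

section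
/- Let e = (0,ℓ), τ_j the Dirichlet Laplace eigenfunctions with eigenvalues λ_j, and P_N the L² projection onto the first N modes. For w ∈ H¹₀(e) ∩ H³(e), assuming |τ_j'(0)|, |τ_j'(ℓ)| ≤ C√λ_j for all j, one has for every j > N: |(w'', τ_j)_{L²(e)}| ≤ (1/λ_j)·( ‖w'''‖_{L²(e)}·‖τ_j'‖_{L²(e)} + C√λ_j·(|w''(0)| + |w''(ℓ)|) ), and consequently |(w'',τ_j)| ≤ C'·λ_j^{-1/2}·‖w‖_{H³(e)}. -/
open Real MeasureTheory intervalIntegral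

/-- Cauchy–Schwarz for interval integrals of nonnegative functions. -/
lemma my_CS {a b : ℝ} (hab : a ≤ b) (f g : ℝ → ℝ)
    (hf0 : ∀ x, 0 ≤ f x) (hg0 : ∀ x, 0 ≤ g x)
    (hfm : AEStronglyMeasurable f (volume.restrict (Set.Ioc a b)))
    (hgm : AEStronglyMeasurable g (volume.restrict (Set.Ioc a b)))
    (hf2 : IntervalIntegrable (fun x => f x ^ 2) volume a b)
    (hg2 : IntervalIntegrable (fun x => g x ^ 2) volume a b) :
    (∫ x in a..b, f x * g x) ≤
      Real.sqrt (∫ x in a..b, f x ^ 2) * Real.sqrt (∫ x in a..b, g x ^ 2) := by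
  rw [intervalIntegral.integral_of_le hab, intervalIntegral.integral_of_le hab,
    intervalIntegral.integral_of_le hab]
  have hf2' : Integrable (fun x => f x ^ 2) (volume.restrict (Set.Ioc a b)) :=
    (intervalIntegrable_iff_integrableOn_Ioc_of_le hab).1 hf2
  have hg2' : Integrable (fun x => g x ^ 2) (volume.restrict (Set.Ioc a b)) :=
    (intervalIntegrable_iff_integrableOn_Ioc_of_le hab).1 hg2
  have hfL : MemLp f 2 (volume.restrict (Set.Ioc a b)) :=
    (memLp_two_iff_integrable_sq hfm).2 (by simpa [sq] using hf2')
  have hgL : MemLp g 2 (volume.restrict (Set.Ioc a b)) :=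
    (memLp_two_iff_integrable_sq hgm).2 (by simpa [sq] using hg2')
  have hconj : (2:ℝ).HolderConjugate 2 := Real.HolderConjugate.two_two
  have h := integral_mul_le_Lp_mul_Lq_of_nonneg (μ := volume.restrict (Set.Ioc a b)) hconj
    (Filter.Eventually.of_forall hf0) (Filter.Eventually.of_forall hg0)
    (by rw [show ENNReal.ofReal (2:ℝ) = 2 by norm_num]; exact hfL)
    (by rw [show ENNReal.ofReal (2:ℝ) = 2 by norm_num]; exact hgL)
  calc (∫ x in Set.Ioc a b, f x * g x) ≤
      (∫ x in Set.Ioc a b, f x ^ (2:ℝ)) ^ (1/(2:ℝ)) * (∫ x in Set.Ioc a b, g x ^ (2:ℝ)) ^ (1/(2:ℝ)) := h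
    _ = Real.sqrt (∫ x in Set.Ioc a b, f x ^ 2) * Real.sqrt (∫ x in Set.Ioc a b, g x ^ 2) := by
        rw [Real.sqrt_eq_rpow, Real.sqrt_eq_rpow,
          show ((2:ℝ)) = ((2:ℕ):ℝ) by norm_num]
        simp [Real.rpow_natCast]

/-- Sobolev-type bound: `H¹(0,ℓ) ↪ C⁰`. -/
lemma my_sup {ℓ : ℝ} (hℓ : 0 < ℓ) (f f' : ℝ → ℂ)
    (hf : ∀ x ∈ Set.Icc 0 ℓ, HasDerivAt f (f' x) x)
    (hm : AEStronglyMeasurable f' (volume.restrict (Set.Ioc 0 ℓ)))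
    (hd : IntervalIntegrable (fun x => ‖f' x‖ ^ 2) volume 0 ℓ)
    (x₀ : ℝ) (hx₀ : x₀ ∈ Set.Icc 0 ℓ) :
    ‖f x₀‖ ≤ Real.sqrt (1 / ℓ + 1) *
      Real.sqrt ((∫ x in (0:ℝ)..ℓ, ‖f x‖ ^ 2) + ∫ x in (0:ℝ)..ℓ, ‖f' x‖ ^ 2) := by
  have hℓ' : (0:ℝ) ≤ ℓ := hℓ.le
  have hfc : ContinuousOn f (Set.Icc 0 ℓ) := fun x hx =>
    (hf x hx).continuousAt.continuousWithinAt
  have hfm : AEStronglyMeasurable f (volume.restrict (Set.Ioc 0 ℓ)) :=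
    (hfc.mono Set.Ioc_subset_Icc_self).aestronglyMeasurable measurableSet_Ioc
  set g : ℝ → ℝ := fun x => ‖f x‖ ^ 2 with hgdef
  have hg : ∀ x ∈ Set.Icc 0 ℓ, HasDerivAt g (2 * (inner ℝ (f x) (f' x) : ℝ)) x := fun x hx =>
    (hf x hx).norm_sq
  have hgc : ContinuousOn g (Set.Icc 0 ℓ) := (hfc.norm).pow 2
  have hfint : IntervalIntegrable g volume 0 ℓ := by
    apply ContinuousOn.intervalIntegrable
    rwa [Set.uIcc_of_le hℓ']
  set G : ℝ → ℝ := fun x => 2 * (inner ℝ (f x) (f' x) : ℝ) with hGdef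
  have hGm : AEStronglyMeasurable G (volume.restrict (Set.Ioc 0 ℓ)) :=
    aestronglyMeasurable_const.mul (hfm.inner hm)
  have hGbd : ∀ x, ‖G x‖ ≤ ‖g x + ‖f' x‖ ^ 2‖ := by
    intro x
    have h1 : |(inner ℝ (f x) (f' x) : ℝ)| ≤ ‖f x‖ * ‖f' x‖ := abs_real_inner_le_norm _ _
    simp only [hGdef, hgdef, Real.norm_eq_abs, abs_mul, abs_two]
    rw [abs_of_nonneg (show (0:ℝ) ≤ ‖f x‖ ^ 2 + ‖f' x‖ ^ 2 by positivity)]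
    nlinarith [norm_nonneg (f x), norm_nonneg (f' x), sq_nonneg (‖f x‖ - ‖f' x‖),
      abs_nonneg (inner ℝ (f x) (f' x) : ℝ)]
  have hGint : IntervalIntegrable G volume 0 ℓ := by
    refine (hfint.add hd).mono_fun ?_ (Filter.Eventually.of_forall hGbd)
    rwa [Set.uIoc_of_le hℓ']
  -- minimum of g
  obtain ⟨y, hy, hmin⟩ := isCompact_Icc.exists_isMinOn (Set.nonempty_Icc.2 hℓ') hgc
  have hgy : ℓ * g y ≤ ∫ x in (0:ℝ)..ℓ, g x := by
    have h := intervalIntegral.integral_mono_on hℓ' (intervalIntegrable_const (c := g y))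
      hfint (fun x hx => isMinOn_iff.1 hmin x hx)
    simpa [smul_eq_mul] using h
  -- FTC on [y, x₀]
  have hsub : Set.uIcc y x₀ ⊆ Set.Icc 0 ℓ := Set.uIcc_subset_Icc hy hx₀
  have hftc : ∫ x in y..x₀, G x = g x₀ - g y := by
    refine integral_eq_sub_of_hasDerivAt (fun x hx => hg x (hsub hx)) ?_
    refine hGint.mono_set ?_
    rw [Set.uIcc_of_le hℓ']
    exact hsub
  have habs : ‖∫ x in y..x₀, G x‖ ≤ ∫ x in (0:ℝ)..ℓ, ‖G x‖ := by
    refine (intervalIntegral.norm_integral_le_integral_norm_uIoc).trans ?_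
    rw [intervalIntegral.integral_of_le hℓ']
    refine setIntegral_mono_set ((intervalIntegrable_iff_integrableOn_Ioc_of_le hℓ').1 hGint.norm)
      (Filter.Eventually.of_forall fun x => norm_nonneg _) ?_
    refine Filter.Eventually.of_forall ?_
    intro x hx
    exact Set.Ioc_subset_Ioc (le_min hy.1 hx₀.1) (max_le hy.2 hx₀.2) hx
  have hB : (∫ x in (0:ℝ)..ℓ, ‖G x‖) ≤ (∫ x in (0:ℝ)..ℓ, g x) + ∫ x in (0:ℝ)..ℓ, ‖f' x‖ ^ 2 := by
    rw [← intervalIntegral.integral_add hfint hd]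
    refine intervalIntegral.integral_mono_on hℓ' hGint.norm (hfint.add hd) ?_
    intro x hx
    refine (hGbd x).trans ?_
    rw [Real.norm_of_nonneg (by positivity)]
  have hg0 : (0:ℝ) ≤ ∫ x in (0:ℝ)..ℓ, g x :=
    intervalIntegral.integral_nonneg hℓ' (fun x _ => by positivity)
  have hd0 : (0:ℝ) ≤ ∫ x in (0:ℝ)..ℓ, ‖f' x‖ ^ 2 :=
    intervalIntegral.integral_nonneg hℓ' (fun x _ => by positivity)
  have hkey : g x₀ ≤ (1 / ℓ + 1) * ((∫ x in (0:ℝ)..ℓ, g x) + ∫ x in (0:ℝ)..ℓ, ‖f' x‖ ^ 2) := by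
    have h1 : g x₀ ≤ g y + ∫ x in (0:ℝ)..ℓ, ‖G x‖ := by
      have := habs
      rw [hftc, Real.norm_eq_abs] at this
      have := (abs_le.1 this).2
      linarith
    have h2 : g y ≤ 1 / ℓ * ∫ x in (0:ℝ)..ℓ, g x := by
      rw [one_div_mul_eq_div, le_div_iff₀ hℓ]
      linarith
    have h3 : (0:ℝ) < 1/ℓ := by positivity
    nlinarith
  calc ‖f x₀‖ = Real.sqrt (g x₀) := by rw [hgdef]; simp [Real.sqrt_sq (norm_nonneg _)]
    _ ≤ Real.sqrt ((1 / ℓ + 1) * ((∫ x in (0:ℝ)..ℓ, g x) + ∫ x in (0:ℝ)..ℓ, ‖f' x‖ ^ 2)) :=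
        Real.sqrt_le_sqrt hkey
    _ = _ := by
        rw [Real.sqrt_mul (by positivity)]

/-- Key computation of Lemma 4.4 (improved_rate_interface): for Dirichlet eigenfunctions
`τ_j` on `(0,ℓ)` with `|τ_j'(0)|, |τ_j'(ℓ)| ≤ C √λ_j`, and `w ∈ H¹₀ ∩ H³`, one has for `j > N`
`|(w'',τ_j)| ≤ λ_j⁻¹ (‖w'''‖_{L²} ‖τ_j'‖_{L²} + C √λ_j (|w''(0)| + |w''(ℓ)|))`, and consequently
`|(w'',τ_j)| ≤ C' λ_j^{-1/2} ‖w‖_{H³}`. -/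
theorem edge_mode_H3_coefficient_bound
    (ℓ : ℝ) (hℓ : 0 < ℓ)
    (τ τ' : ℕ → ℝ → ℝ) (lam : ℕ → ℝ)
    (hpos : ∀ j, 0 < lam j) (hmono : Monotone lam)
    (hτ' : ∀ j, ∀ x ∈ Set.Icc 0 ℓ, HasDerivAt (τ j) (τ' j x) x)
    (hτ'' : ∀ j, ∀ x ∈ Set.Icc 0 ℓ, HasDerivAt (τ' j) (-(lam j) * τ j x) x)
    (hτ0 : ∀ j, τ j 0 = 0) (hτℓ : ∀ j, τ j ℓ = 0)
    (hnorm : ∀ j, (∫ x in (0:ℝ)..ℓ, (τ j x) ^ 2) = 1)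
    (hnorm' : ∀ j, (∫ x in (0:ℝ)..ℓ, (τ' j x) ^ 2) = lam j)
    (C : ℝ) (hC : 0 < C)
    (hbd0 : ∀ j, |τ' j 0| ≤ C * Real.sqrt (lam j))
    (hbdℓ : ∀ j, |τ' j ℓ| ≤ C * Real.sqrt (lam j)) :
    ∃ C' > 0, ∀ (w w' w'' w''' : ℝ → ℂ),
      (∀ x ∈ Set.Icc 0 ℓ, HasDerivAt w (w' x) x) →
      (∀ x ∈ Set.Icc 0 ℓ, HasDerivAt w' (w'' x) x) →
      (∀ x ∈ Set.Icc 0 ℓ, HasDerivAt w'' (w''' x) x) →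
      IntervalIntegrable (fun x => ‖w''' x‖ ^ 2) volume 0 ℓ →
      w 0 = 0 → w ℓ = 0 →
      ∀ (N j : ℕ), N < j →
        ‖∫ x in (0:ℝ)..ℓ, w'' x * ((τ j x : ℝ) : ℂ)‖ ≤
          (1 / lam j) *
            (Real.sqrt (∫ x in (0:ℝ)..ℓ, ‖w''' x‖ ^ 2) *
                Real.sqrt (∫ x in (0:ℝ)..ℓ, (τ' j x) ^ 2) +
              C * Real.sqrt (lam j) * (‖w'' 0‖ + ‖w'' ℓ‖)) ∧
        ‖∫ x in (0:ℝ)..ℓ, w'' x * ((τ j x : ℝ) : ℂ)‖ ≤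
          C' * (1 / Real.sqrt (lam j)) *
            Real.sqrt ((∫ x in (0:ℝ)..ℓ, ‖w x‖ ^ 2) + (∫ x in (0:ℝ)..ℓ, ‖w' x‖ ^ 2) +
              (∫ x in (0:ℝ)..ℓ, ‖w'' x‖ ^ 2) + ∫ x in (0:ℝ)..ℓ, ‖w''' x‖ ^ 2) := by
  have hℓ' : (0:ℝ) ≤ ℓ := hℓ.le
  refine ⟨1 + 2 * C * Real.sqrt (1 / ℓ + 1), by positivity, ?_⟩
  intro w w' w'' w''' hw hw' hw'' hw3 h00 h0ℓ N j hNj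
  have hlamj : 0 < lam j := hpos j
  -- continuity
  have hτc : ContinuousOn (τ j) (Set.Icc 0 ℓ) := fun x hx =>
    (hτ' j x hx).continuousAt.continuousWithinAt
  have hτ'c : ContinuousOn (τ' j) (Set.Icc 0 ℓ) := fun x hx =>
    (hτ'' j x hx).continuousAt.continuousWithinAt
  have hwc : ContinuousOn w (Set.Icc 0 ℓ) := fun x hx =>
    (hw x hx).continuousAt.continuousWithinAt
  have hwc' : ContinuousOn w' (Set.Icc 0 ℓ) := fun x hx =>
    (hw' x hx).continuousAt.continuousWithinAt
  have hwc'' : ContinuousOn w'' (Set.Icc 0 ℓ) := fun x hx =>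
    (hw'' x hx).continuousAt.continuousWithinAt
  -- measurability of w'''
  have hw3m : AEStronglyMeasurable w''' (volume.restrict (Set.Ioc 0 ℓ)) := by
    refine ((measurable_deriv w'').aestronglyMeasurable).congr ?_
    refine (ae_restrict_iff' measurableSet_Ioc).2 (Filter.Eventually.of_forall ?_)
    intro x hx
    exact (hw'' x (Set.Ioc_subset_Icc_self hx)).deriv
  -- bound for τ' on the interval
  obtain ⟨M, hM⟩ := isCompact_Icc.exists_bound_of_continuousOn hτ'c
  have hM0 : 0 ≤ M := le_trans (norm_nonneg _) (hM 0 (Set.left_mem_Icc.2 hℓ'))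
  -- integrability of the products
  have hcoe : ContinuousOn (fun x => ((τ' j x : ℝ) : ℂ)) (Set.Icc 0 ℓ) :=
    Complex.continuous_ofReal.comp_continuousOn hτ'c
  have hprod1 : IntervalIntegrable (fun x => w''' x * ((τ' j x : ℝ) : ℂ)) volume 0 ℓ := by
    have hdom : IntervalIntegrable (fun x => M * (‖w''' x‖ ^ 2 + 1)) volume 0 ℓ :=
      (hw3.add (intervalIntegrable_const (c := (1:ℝ)))).const_mul M
    refine hdom.mono_fun ?_ ?_
    · rw [Set.uIoc_of_le hℓ']
      exact hw3m.mul ((hcoe.mono Set.Ioc_subset_Icc_self).aestronglyMeasurable measurableSet_Ioc)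
    · rw [Set.uIoc_of_le hℓ']
      refine (ae_restrict_iff' measurableSet_Ioc).2 (Filter.Eventually.of_forall ?_)
      intro x hx
      have h1 : |τ' j x| ≤ M := by
        have := hM x (Set.Ioc_subset_Icc_self hx); rwa [Real.norm_eq_abs] at this
      have h2 : ‖w''' x * ((τ' j x : ℝ) : ℂ)‖ = ‖w''' x‖ * |τ' j x| := by
        rw [norm_mul, Complex.norm_real, Real.norm_eq_abs]
      show ‖w''' x * ((τ' j x : ℝ) : ℂ)‖ ≤ ‖M * (‖w''' x‖ ^ 2 + 1)‖
      rw [h2, Real.norm_of_nonneg (by positivity)]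
      nlinarith [norm_nonneg (w''' x), abs_nonneg (τ' j x), sq_nonneg (‖w''' x‖ - 1)]
  have hprod2 : IntervalIntegrable (fun x => w'' x * ((-(lam j) * τ j x : ℝ) : ℂ)) volume 0 ℓ := by
    apply ContinuousOn.intervalIntegrable
    rw [Set.uIcc_of_le hℓ']
    exact hwc''.mul (Complex.continuous_ofReal.comp_continuousOn (continuousOn_const.mul hτc))
  -- FTC / integration by parts
  have hderiv : ∀ x ∈ Set.uIcc (0:ℝ) ℓ, HasDerivAt (fun t => w'' t * ((τ' j t : ℝ) : ℂ))
      (w''' x * ((τ' j x : ℝ) : ℂ) + w'' x * ((-(lam j) * τ j x : ℝ) : ℂ)) x := by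
    intro x hx
    rw [Set.uIcc_of_le hℓ'] at hx
    exact (hw'' x hx).mul ((hτ'' j x hx).ofReal_comp)
  have hFTC := integral_eq_sub_of_hasDerivAt hderiv (hprod1.add hprod2)
  rw [intervalIntegral.integral_add hprod1 hprod2] at hFTC
  have hpull : (∫ x in (0:ℝ)..ℓ, w'' x * ((-(lam j) * τ j x : ℝ) : ℂ))
      = -(lam j : ℂ) * ∫ x in (0:ℝ)..ℓ, w'' x * ((τ j x : ℝ) : ℂ) := by
    rw [← intervalIntegral.integral_const_mul]
    apply intervalIntegral.integral_congr
    intro x hx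
    push_cast
    ring
  rw [hpull] at hFTC
  set I := ∫ x in (0:ℝ)..ℓ, w'' x * ((τ j x : ℝ) : ℂ) with hI
  set A := ∫ x in (0:ℝ)..ℓ, w''' x * ((τ' j x : ℝ) : ℂ) with hA
  have hid : (lam j : ℂ) * I = A - w'' ℓ * ((τ' j ℓ : ℝ) : ℂ) + w'' 0 * ((τ' j 0 : ℝ) : ℂ) := by
    linear_combination -hFTC
  -- norm estimate
  have hnormle : lam j * ‖I‖ ≤ ‖A‖ + C * Real.sqrt (lam j) * (‖w'' 0‖ + ‖w'' ℓ‖) := by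
    have h1 : lam j * ‖I‖ = ‖(lam j : ℂ) * I‖ := by
      rw [norm_mul, Complex.norm_real, Real.norm_eq_abs, abs_of_pos hlamj]
    rw [h1, hid]
    have e0 : ‖w'' 0 * ((τ' j 0 : ℝ) : ℂ)‖ = ‖w'' 0‖ * |τ' j 0| := by
      rw [norm_mul, Complex.norm_real, Real.norm_eq_abs]
    have eℓ : ‖w'' ℓ * ((τ' j ℓ : ℝ) : ℂ)‖ = ‖w'' ℓ‖ * |τ' j ℓ| := by
      rw [norm_mul, Complex.norm_real, Real.norm_eq_abs]
    have h2 : ‖A - w'' ℓ * ((τ' j ℓ : ℝ) : ℂ) + w'' 0 * ((τ' j 0 : ℝ) : ℂ)‖ ≤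
        ‖A‖ + ‖w'' ℓ‖ * |τ' j ℓ| + ‖w'' 0‖ * |τ' j 0| := by
      rw [← e0, ← eℓ]
      exact (norm_add_le _ _).trans (by linarith [norm_sub_le A (w'' ℓ * ((τ' j ℓ : ℝ) : ℂ))])
    refine h2.trans ?_
    have hb0 := hbd0 j
    have hbℓ := hbdℓ j
    nlinarith [norm_nonneg (w'' 0), norm_nonneg (w'' ℓ)]
  -- Cauchy–Schwarz
  have hsqint : IntervalIntegrable (fun x => |τ' j x| ^ 2) volume 0 ℓ := by
    have : IntervalIntegrable (fun x => (τ' j x) ^ 2) volume 0 ℓ := by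
      apply ContinuousOn.intervalIntegrable
      rw [Set.uIcc_of_le hℓ']
      exact hτ'c.pow 2
    simpa [sq_abs] using this
  have hCS : ‖A‖ ≤ Real.sqrt (∫ x in (0:ℝ)..ℓ, ‖w''' x‖ ^ 2) *
      Real.sqrt (∫ x in (0:ℝ)..ℓ, (τ' j x) ^ 2) := by
    have h1 : ‖A‖ ≤ ∫ x in (0:ℝ)..ℓ, ‖w''' x * ((τ' j x : ℝ) : ℂ)‖ :=
      intervalIntegral.norm_integral_le_integral_norm hℓ'
    have h2 : (∫ x in (0:ℝ)..ℓ, ‖w''' x * ((τ' j x : ℝ) : ℂ)‖)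
        = ∫ x in (0:ℝ)..ℓ, ‖w''' x‖ * |τ' j x| := by
      apply intervalIntegral.integral_congr
      intro x _
      simp [norm_mul, Complex.norm_real, Real.norm_eq_abs]
    have h3 := my_CS hℓ' (fun x => ‖w''' x‖) (fun x => |τ' j x|)
      (fun x => norm_nonneg _) (fun x => abs_nonneg _) hw3m.norm
      (((hτ'c.mono Set.Ioc_subset_Icc_self).abs).aestronglyMeasurable measurableSet_Ioc)
      hw3 hsqint
    have h4 : (∫ x in (0:ℝ)..ℓ, |τ' j x| ^ 2) = ∫ x in (0:ℝ)..ℓ, (τ' j x) ^ 2 := by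
      apply intervalIntegral.integral_congr
      intro x _
      exact sq_abs _
    rw [h4] at h3
    calc ‖A‖ ≤ ∫ x in (0:ℝ)..ℓ, ‖w''' x‖ * |τ' j x| := h2 ▸ h1
      _ ≤ _ := h3
  -- first bound
  have bound1 : ‖I‖ ≤ (1 / lam j) *
      (Real.sqrt (∫ x in (0:ℝ)..ℓ, ‖w''' x‖ ^ 2) * Real.sqrt (∫ x in (0:ℝ)..ℓ, (τ' j x) ^ 2) +
        C * Real.sqrt (lam j) * (‖w'' 0‖ + ‖w'' ℓ‖)) := by
    rw [one_div, inv_mul_eq_div, le_div_iff₀ hlamj]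
    nlinarith
  refine ⟨bound1, ?_⟩
  -- second bound
  set S := (∫ x in (0:ℝ)..ℓ, ‖w x‖ ^ 2) + (∫ x in (0:ℝ)..ℓ, ‖w' x‖ ^ 2) +
      (∫ x in (0:ℝ)..ℓ, ‖w'' x‖ ^ 2) + ∫ x in (0:ℝ)..ℓ, ‖w''' x‖ ^ 2 with hS
  have hi1 : (0:ℝ) ≤ ∫ x in (0:ℝ)..ℓ, ‖w x‖ ^ 2 :=
    intervalIntegral.integral_nonneg hℓ' (fun x _ => by positivity)
  have hi2 : (0:ℝ) ≤ ∫ x in (0:ℝ)..ℓ, ‖w' x‖ ^ 2 :=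
    intervalIntegral.integral_nonneg hℓ' (fun x _ => by positivity)
  have hi3 : (0:ℝ) ≤ ∫ x in (0:ℝ)..ℓ, ‖w'' x‖ ^ 2 :=
    intervalIntegral.integral_nonneg hℓ' (fun x _ => by positivity)
  have hi4 : (0:ℝ) ≤ ∫ x in (0:ℝ)..ℓ, ‖w''' x‖ ^ 2 :=
    intervalIntegral.integral_nonneg hℓ' (fun x _ => by positivity)
  have hS0 : (0:ℝ) ≤ S := by rw [hS]; positivity
  have h3le : Real.sqrt (∫ x in (0:ℝ)..ℓ, ‖w''' x‖ ^ 2) ≤ Real.sqrt S :=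
    Real.sqrt_le_sqrt (by rw [hS]; linarith)
  -- Sobolev bound on w'' at endpoints
  have hsub : Real.sqrt ((∫ x in (0:ℝ)..ℓ, ‖w'' x‖ ^ 2) + ∫ x in (0:ℝ)..ℓ, ‖w''' x‖ ^ 2)
      ≤ Real.sqrt S := Real.sqrt_le_sqrt (by rw [hS]; linarith)
  have hK0 : (0:ℝ) ≤ Real.sqrt (1 / ℓ + 1) := Real.sqrt_nonneg _
  have hsup0 : ‖w'' 0‖ ≤ Real.sqrt (1 / ℓ + 1) * Real.sqrt S :=
    (my_sup hℓ w'' w''' hw'' hw3m hw3 0 (Set.left_mem_Icc.2 hℓ')).trans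
      (mul_le_mul_of_nonneg_left hsub hK0)
  have hsupℓ : ‖w'' ℓ‖ ≤ Real.sqrt (1 / ℓ + 1) * Real.sqrt S :=
    (my_sup hℓ w'' w''' hw'' hw3m hw3 ℓ (Set.right_mem_Icc.2 hℓ')).trans
      (mul_le_mul_of_nonneg_left hsub hK0)
  have hsq : Real.sqrt (lam j) * Real.sqrt (lam j) = lam j := Real.mul_self_sqrt hlamj.le
  have hsqpos : 0 < Real.sqrt (lam j) := Real.sqrt_pos.2 hlamj
  set K := Real.sqrt (1 / ℓ + 1) with hKdef
  set s := Real.sqrt S with hsdef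
  set r := Real.sqrt (lam j) with hrdef
  calc ‖I‖ ≤ (1 / lam j) *
      (Real.sqrt (∫ x in (0:ℝ)..ℓ, ‖w''' x‖ ^ 2) * Real.sqrt (∫ x in (0:ℝ)..ℓ, (τ' j x) ^ 2) +
        C * Real.sqrt (lam j) * (‖w'' 0‖ + ‖w'' ℓ‖)) := bound1
    _ ≤ (1 / lam j) * (s * r + C * r * (K * s + K * s)) := by
        rw [hnorm' j]
        gcongr
    _ = (1 + 2 * C * K) * (1 / r) * s := by
        rw [← hsq]
        field_simp
        ring
end
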